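/- arXiv:1304.5320 — 3 statements merged into one kernel-verified Lean document; each statement's English description precedes it below -/
import Mathlib

section
/- For a prime p and n ≥ 1, the generating n-tuples of ℤ_p^n are exactly the bases of ℤ_p^n as a vector space over ℤ_p, Nielsen moves correspond to elementary row operations which preserve the determinant of the corresponding matrix in GL_n(ℤ_p), and hence the product replacement graph Γ_n(ℤ_p^n) has exactly p−1 connected components, one for each nonzero value of the determinant. -/
open Subgroup Set

/-- `T` is obtained from `S` by a single Nielsen move. -/
def nielsenMove {G : Type*} [Group G] {n : ℕ} (S T : Fin n → G) : Prop :=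
  ∃ i j : Fin n, i ≠ j ∧
    (T = Function.update S j (S j * S i) ∨ T = Function.update S j (S j * (S i)⁻¹) ∨
     T = Function.update S j (S i * S j) ∨ T = Function.update S j ((S i)⁻¹ * S j))

/-- The product replacement graph on generating `n`-tuples of `G`. -/
def genPRG (G : Type*) [Group G] (n : ℕ) :
    SimpleGraph {S : Fin n → G // Subgroup.closure (Set.range S) = ⊤} where
  Adj S T := S ≠ T ∧ (nielsenMove S.1 T.1 ∨ nielsenMove T.1 S.1)
  symm := ⟨fun S T h => ⟨h.1.symm, h.2.symm⟩⟩
  loopless := ⟨fun S h => h.1 rfl⟩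

section
variable {p : ℕ} [Fact p.Prime] {n : ℕ}

local notation "GG" => Multiplicative (Fin n → ZMod p)

def rws {p n : ℕ} (S : Fin n → Multiplicative (Fin n → ZMod p)) :
    Matrix (Fin n) (Fin n) (ZMod p) :=
  Matrix.of fun i j => Multiplicative.toAdd (S i) j

lemma mem_closure_iff_mem_span (S : Fin n → GG) (x : GG) :
    x ∈ Subgroup.closure (Set.range S) ↔
      Multiplicative.toAdd x ∈ Submodule.span (ZMod p) (Set.range (rws S)) := by
  haveI : NeZero p := ⟨(Fact.out : p.Prime).ne_zero⟩
  constructor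
  · intro hx
    induction hx using Subgroup.closure_induction with
    | mem y hy =>
      obtain ⟨a, rfl⟩ := hy
      exact Submodule.subset_span ⟨a, rfl⟩
    | one => exact Submodule.zero_mem _
    | mul a b _ _ ha hb => exact Submodule.add_mem _ ha hb
    | inv a _ ha => exact Submodule.neg_mem _ ha
  · intro hx
    have : ∀ v ∈ Submodule.span (ZMod p) (Set.range (rws S)),
        Multiplicative.ofAdd v ∈ Subgroup.closure (Set.range S) := by
      intro v hv
      induction hv using Submodule.span_induction with
      | mem y hy =>
        obtain ⟨a, rfl⟩ := hy
        exact Subgroup.subset_closure ⟨a, rfl⟩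
      | zero => exact Subgroup.one_mem _
      | add a b _ _ ha hb => exact Subgroup.mul_mem _ ha hb
      | smul c v _ hv =>
        obtain ⟨m, rfl⟩ := ZMod.natCast_zmod_surjective (n := p) c
        rw [Nat.cast_smul_eq_nsmul]
        exact Subgroup.pow_mem _ hv m
    exact this _ hx

lemma gen_iff (S : Fin n → GG) :
    Subgroup.closure (Set.range S) = ⊤ ↔ IsUnit (rws S).det := by
  rw [← Matrix.isUnit_iff_isUnit_det, ← Matrix.vecMul_surjective_iff_isUnit]
  have hsurj : Function.Surjective (rws S).vecMul ↔
      LinearMap.range (rws S).vecMulLinear = ⊤ := by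
    rw [LinearMap.range_eq_top]
    exact ⟨fun h => fun v => h v, fun h => fun v => h v⟩
  rw [hsurj, _root_.range_vecMulLinear]
  · skip
    constructor
    · intro h
      rw [eq_top_iff]
      rintro v -
      have : Multiplicative.ofAdd v ∈ Subgroup.closure (Set.range S) := h ▸ Subgroup.mem_top _
      exact (mem_closure_iff_mem_span S (Multiplicative.ofAdd v)).1 this
    · intro h
      rw [eq_top_iff]
      rintro x -
      rw [mem_closure_iff_mem_span]
      exact h ▸ Submodule.mem_top

lemma rws_apply (S : Fin n → GG) (i : Fin n) : rws S i = Multiplicative.toAdd (S i) := rfl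

lemma rws_update (S : Fin n → GG) (j : Fin n) (v : Fin n → ZMod p) :
    rws (Function.update S j (Multiplicative.ofAdd v)) = (rws S).updateRow j v := by
  ext a b
  rw [Matrix.updateRow_apply]
  simp only [rws, Matrix.of_apply, Function.update_apply]
  split_ifs <;> rfl

lemma det_nielsen {S T : Fin n → GG} (h : nielsenMove S T) : (rws T).det = (rws S).det := by
  obtain ⟨i, j, hij, h⟩ := h
  have key : ∀ c : ZMod p, ((rws S).updateRow j (rws S j + c • rws S i)).det = (rws S).det :=
    fun c => Matrix.det_updateRow_add_smul_self _ hij.symm c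
  have e1 : S j * S i = Multiplicative.ofAdd
      (Multiplicative.toAdd (S j) + (1 : ZMod p) • Multiplicative.toAdd (S i)) :=
    Multiplicative.toAdd.injective (by simp)
  have e2 : S j * (S i)⁻¹ = Multiplicative.ofAdd
      (Multiplicative.toAdd (S j) + (-1 : ZMod p) • Multiplicative.toAdd (S i)) :=
    Multiplicative.toAdd.injective (by simp <;> abel)
  have e3 : S i * S j = Multiplicative.ofAdd
      (Multiplicative.toAdd (S j) + (1 : ZMod p) • Multiplicative.toAdd (S i)) :=
    Multiplicative.toAdd.injective (by simp <;> abel)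
  have e4 : (S i)⁻¹ * S j = Multiplicative.ofAdd
      (Multiplicative.toAdd (S j) + (-1 : ZMod p) • Multiplicative.toAdd (S i)) :=
    Multiplicative.toAdd.injective (by simp <;> abel)
  rcases h with h | h | h | h <;> subst h
  · rw [e1, rws_update]; exact key 1
  · rw [e2, rws_update]; exact key (-1)
  · rw [e3, rws_update]; exact key 1
  · rw [e4, rws_update]; exact key (-1)

lemma reach_det {S T : {S : Fin n → GG // Subgroup.closure (Set.range S) = ⊤}}
    (h : (genPRG GG n).Reachable S T) : (rws S.1).det = (rws T.1).det := by
  obtain ⟨w⟩ := h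
  induction w with
  | nil => rfl
  | cons h _ ih =>
    refine Eq.trans ?_ ih
    rcases h.2 with hm | hm
    · exact (det_nielsen hm).symm
    · exact det_nielsen hm
end

section
variable {p : ℕ} [Fact p.Prime] {n : ℕ}
local notation "GG" => Multiplicative (Fin n → ZMod p)
local notation "Gen" => {S : Fin n → Multiplicative (Fin n → ZMod p) // Subgroup.closure (Set.range S) = ⊤}

lemma row_ne_zero (S : Gen) (i : Fin n) : Multiplicative.toAdd (S.1 i) ≠ 0 := by
  intro h
  have hdet : IsUnit (rws S.1).det := (gen_iff _).1 S.2
  have hz : (rws S.1).det = 0 :=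
    Matrix.det_eq_zero_of_row_eq_zero i (fun j => congrFun h j)
  rw [hz] at hdet
  exact not_isUnit_zero hdet

lemma gen_update (S : Gen) (i j : Fin n) (hij : i ≠ j) (c : ZMod p) :
    Subgroup.closure (Set.range (Function.update S.1 j
      (Multiplicative.ofAdd (Multiplicative.toAdd (S.1 j) + c • Multiplicative.toAdd (S.1 i))))) = ⊤ := by
  rw [gen_iff, rws_update]
  have h : (Multiplicative.toAdd (S.1 j) + c • Multiplicative.toAdd (S.1 i))
      = rws S.1 j + c • rws S.1 i := rfl
  rw [h, Matrix.det_updateRow_add_smul_self _ hij.symm c]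
  exact (gen_iff _).1 S.2

lemma reach_rowop (S T : Gen) (i j : Fin n) (hij : i ≠ j) (c : ZMod p)
    (hT : T.1 = Function.update S.1 j
      (Multiplicative.ofAdd (Multiplicative.toAdd (S.1 j) + c • Multiplicative.toAdd (S.1 i)))) :
    (genPRG (Multiplicative (Fin n → ZMod p)) n).Reachable S T := by
  haveI : NeZero p := ⟨(Fact.out : p.Prime).ne_zero⟩
  obtain ⟨m, rfl⟩ := ZMod.natCast_zmod_surjective c
  have main : ∀ m : ℕ, (genPRG (Multiplicative (Fin n → ZMod p)) n).Reachable S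
      ⟨_, gen_update S i j hij (m : ZMod p)⟩ := by
    intro m
    induction m with
    | zero =>
      have h0 : (⟨_, gen_update S i j hij ((0:ℕ) : ZMod p)⟩ : Gen) = S := by
        apply Subtype.ext
        simp only [Nat.cast_zero, zero_smul, add_zero]
        exact Function.update_eq_self j S.1
      rw [h0]
    | succ m ih =>
      refine ih.trans (SimpleGraph.Adj.reachable ?_)
      constructor
      · intro hEq
        have h1 := congrFun (congrArg Subtype.val hEq) j
        simp only [Function.update_self] at h1
        have h2 := congrArg Multiplicative.toAdd h1
        simp only [toAdd_ofAdd] at h2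
        have h3 := add_left_cancel h2
        rw [Nat.cast_succ, add_smul, one_smul, left_eq_add] at h3
        exact row_ne_zero S i h3
      · left
        refine ⟨i, j, hij, Or.inl ?_⟩
        set x := Multiplicative.toAdd (S.1 i)
        set y := Multiplicative.toAdd (S.1 j)
        have hAi : Function.update S.1 j (Multiplicative.ofAdd (y + (m : ZMod p) • x)) i = S.1 i :=
          Function.update_of_ne hij _ _
        have hAj : Function.update S.1 j (Multiplicative.ofAdd (y + (m : ZMod p) • x)) j
            = Multiplicative.ofAdd (y + (m : ZMod p) • x) := Function.update_self _ _ _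
        show Function.update S.1 j (Multiplicative.ofAdd (y + ((m+1 : ℕ) : ZMod p) • x))
          = Function.update (Function.update S.1 j (Multiplicative.ofAdd (y + (m : ZMod p) • x))) j
            (Function.update S.1 j (Multiplicative.ofAdd (y + (m : ZMod p) • x)) j *
             Function.update S.1 j (Multiplicative.ofAdd (y + (m : ZMod p) • x)) i)
        rw [hAi, hAj, Function.update_idem]
        have hval : (Multiplicative.ofAdd (y + ((m+1 : ℕ) : ZMod p) • x))
            = Multiplicative.ofAdd (y + (m : ZMod p) • x) * S.1 i := by
          apply Multiplicative.toAdd.injective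
          show y + ((m+1 : ℕ) : ZMod p) • x = (y + (m : ZMod p) • x) + x
          rw [Nat.cast_succ, add_smul, one_smul]
          abel
        rw [hval]
  have hTeq : T = ⟨_, gen_update S i j hij (m : ZMod p)⟩ := Subtype.ext hT
  rw [hTeq]
  exact main m
lemma reach_pairscale (S T : Gen) (i j : Fin n) (hij : i ≠ j) (d : ZMod p) (hd : d ≠ 0)
    (hT : T.1 = Function.update (Function.update S.1 i
        (Multiplicative.ofAdd (d • Multiplicative.toAdd (S.1 i)))) j
        (Multiplicative.ofAdd (d⁻¹ • Multiplicative.toAdd (S.1 j)))) :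
    (genPRG (Multiplicative (Fin n → ZMod p)) n).Reachable S T := by
  set x := Multiplicative.toAdd (S.1 i) with hx
  set y := Multiplicative.toAdd (S.1 j) with hy
  set U1 : Gen := ⟨_, gen_update S i j hij (d-1)⟩ with hU1
  have R1 : (genPRG (Multiplicative (Fin n → ZMod p)) n).Reachable S U1 :=
    reach_rowop S U1 i j hij (d-1) rfl
  set U2 : Gen := ⟨_, gen_update U1 j i hij.symm 1⟩ with hU2
  have R2 : (genPRG (Multiplicative (Fin n → ZMod p)) n).Reachable U1 U2 :=
    reach_rowop U1 U2 j i hij.symm 1 rfl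
  set U3 : Gen := ⟨_, gen_update U2 i j hij (d⁻¹-1)⟩ with hU3
  have R3 : (genPRG (Multiplicative (Fin n → ZMod p)) n).Reachable U2 U3 :=
    reach_rowop U2 U3 i j hij (d⁻¹-1) rfl
  have hU1i : U1.1 i = S.1 i := Function.update_of_ne hij _ _
  have hU1j : U1.1 j = Multiplicative.ofAdd (y + (d-1) • x) := Function.update_self _ _ _
  have hU2i : U2.1 i = Multiplicative.ofAdd (x + (1:ZMod p) • (y + (d-1) • x)) := by
    show Function.update U1.1 i (Multiplicative.ofAdd (Multiplicative.toAdd (U1.1 i)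
      + (1:ZMod p) • Multiplicative.toAdd (U1.1 j))) i = _
    rw [Function.update_self, hU1i, hU1j]
    rfl
  have hU2j : U2.1 j = Multiplicative.ofAdd (y + (d-1) • x) := by
    rw [show U2.1 j = U1.1 j from Function.update_of_ne hij.symm _ _, hU1j]
  have hU3i : U3.1 i = Multiplicative.ofAdd (x + (1:ZMod p) • (y + (d-1) • x)) := by
    rw [show U3.1 i = U2.1 i from Function.update_of_ne hij _ _, hU2i]
  have hU3j : U3.1 j = Multiplicative.ofAdd ((y + (d-1) • x)
      + (d⁻¹-1) • (x + (1:ZMod p) • (y + (d-1) • x))) := by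
    show Function.update U2.1 j (Multiplicative.ofAdd (Multiplicative.toAdd (U2.1 j)
      + (d⁻¹-1) • Multiplicative.toAdd (U2.1 i))) j = _
    rw [Function.update_self, hU2j, hU2i]
    rfl
  refine (R1.trans (R2.trans R3)).trans ?_
  refine reach_rowop U3 T j i hij.symm (-d) ?_
  have hTi : T.1 i = Multiplicative.ofAdd (d • x) := by
    rw [hT, Function.update_of_ne hij _ _, Function.update_self]
  have hTj : T.1 j = Multiplicative.ofAdd (d⁻¹ • y) := by
    rw [hT, Function.update_self]
  funext a
  rcases eq_or_ne a i with rfl | hai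
  · rw [Function.update_self, hTi, hU3i, hU3j]
    apply Multiplicative.toAdd.injective
    show d • x = (x + (1:ZMod p) • (y + (d-1) • x))
      + (-d) • ((y + (d-1) • x) + (d⁻¹-1) • (x + (1:ZMod p) • (y + (d-1) • x)))
    match_scalars <;> field_simp <;> ring
  · rw [Function.update_of_ne hai _ _]
    rcases eq_or_ne a j with rfl | haj
    · rw [hTj, hU3j]
      apply Multiplicative.toAdd.injective
      show d⁻¹ • y = (y + (d-1) • x) + (d⁻¹-1) • (x + (1:ZMod p) • (y + (d-1) • x))
      match_scalars <;> field_simp <;> ring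
    · have h3a : U3.1 a = S.1 a := by
        rw [show U3.1 a = U2.1 a from Function.update_of_ne haj _ _,
          show U2.1 a = U1.1 a from Function.update_of_ne hai _ _,
          show U1.1 a = S.1 a from Function.update_of_ne haj _ _]
      rw [h3a, hT, Function.update_of_ne haj _ _, Function.update_of_ne hai _ _]


lemma det_two_scale (M : Matrix (Fin n) (Fin n) (ZMod p)) (i j : Fin n) (hij : i ≠ j)
    (a b : ZMod p) :
    ((M.updateRow i (a • M i)).updateRow j (b • M j)).det = b * (a * M.det) := by
  have h1 : (M.updateRow i (a • M i)) j = M j := Matrix.updateRow_ne hij.symm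
  rw [← h1, Matrix.det_updateRow_smul, Matrix.updateRow_eq_self,
    Matrix.det_updateRow_smul, Matrix.updateRow_eq_self]

lemma reach_scale_aux (m : ℕ) : ∀ (k : ℕ), k < n → m + k = n - 1 →
    ∀ (S T : Gen) (d : Fin n → ZMod p), (∏ i, d i) = 1 →
    (∀ i : Fin n, (i : ℕ) < k → d i = 1) →
    (∀ a, Multiplicative.toAdd (T.1 a) = d a • Multiplicative.toAdd (S.1 a)) →
    (genPRG (Multiplicative (Fin n → ZMod p)) n).Reachable S T := by
  induction m with
  | zero =>
    intro k hk hmk S T d hprod hsmall hT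
    have hd1 : ∀ i : Fin n, d i = 1 := by
      intro i
      rcases lt_or_ge (i : ℕ) k with h | h
      · exact hsmall i h
      · have hik : (i : ℕ) = k := by have := i.isLt; omega
        rw [← Finset.mul_prod_erase Finset.univ d (Finset.mem_univ i)] at hprod
        rw [Finset.prod_eq_one ?_, mul_one] at hprod
        · exact hprod
        · intro b hb
          apply hsmall
          have hbne : b ≠ i := (Finset.mem_erase.mp hb).1
          have hbk : (b : ℕ) ≠ k := fun hbk => hbne (Fin.ext (by omega))
          have := b.isLt; omega
    have hTS : T = S := by
      apply Subtype.ext; funext a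
      apply Multiplicative.toAdd.injective
      rw [hT a, hd1 a, one_smul]
    rw [hTS]
  | succ m ih =>
    intro k hk hmk S T d hprod hsmall hT
    have hk1 : k + 1 < n := by omega
    set i : Fin n := ⟨k, hk⟩ with hi
    set j : Fin n := ⟨k+1, hk1⟩ with hj
    have hij : i ≠ j := by simp [hi, hj, Fin.ext_iff]
    have hiv : (i : ℕ) = k := rfl
    have hjv : (j : ℕ) = k + 1 := rfl
    have hdi : d i ≠ 0 := by
      intro h0
      rw [Finset.prod_eq_zero (Finset.mem_univ i) h0] at hprod
      exact zero_ne_one hprod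
    have hUgen : Subgroup.closure (Set.range (Function.update (Function.update S.1 i
        (Multiplicative.ofAdd (d i • Multiplicative.toAdd (S.1 i)))) j
        (Multiplicative.ofAdd ((d i)⁻¹ • Multiplicative.toAdd (S.1 j))))) = ⊤ := by
      rw [gen_iff]
      have e1 : rws (Function.update S.1 i
          (Multiplicative.ofAdd (d i • Multiplicative.toAdd (S.1 i))))
          = (rws S.1).updateRow i (d i • rws S.1 i) := rws_update _ _ _
      have e2 : rws (Function.update (Function.update S.1 i
          (Multiplicative.ofAdd (d i • Multiplicative.toAdd (S.1 i)))) j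
          (Multiplicative.ofAdd ((d i)⁻¹ • Multiplicative.toAdd (S.1 j))))
          = ((rws S.1).updateRow i (d i • rws S.1 i)).updateRow j ((d i)⁻¹ • rws S.1 j) := by
        rw [rws_update, e1]; rfl
      rw [e2, det_two_scale _ i j hij]
      have hS : IsUnit (rws S.1).det := (gen_iff _).1 S.2
      rw [isUnit_iff_ne_zero] at hS ⊢
      exact mul_ne_zero (inv_ne_zero hdi) (mul_ne_zero hdi hS)
    set U : Gen := ⟨_, hUgen⟩ with hU
    have RSU : (genPRG (Multiplicative (Fin n → ZMod p)) n).Reachable S U :=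
      reach_pairscale S U i j hij (d i) hdi rfl
    set d' : Fin n → ZMod p :=
      Function.update (Function.update d i 1) j (d i * d j) with hd'
    have hUi : U.1 i = Multiplicative.ofAdd (d i • Multiplicative.toAdd (S.1 i)) := by
      show Function.update _ j _ i = _
      rw [Function.update_of_ne hij, Function.update_self]
    have hUj : U.1 j = Multiplicative.ofAdd ((d i)⁻¹ • Multiplicative.toAdd (S.1 j)) := by
      show Function.update _ j _ j = _
      rw [Function.update_self]
    have hUa : ∀ a, a ≠ i → a ≠ j → U.1 a = S.1 a := by
      intro a hai haj
      show Function.update _ j _ a = _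
      rw [Function.update_of_ne haj, Function.update_of_ne hai]
    have hprod' : (∏ a, d' a) = 1 := by
      have himem : i ∈ Finset.univ \ {j} :=
        Finset.mem_sdiff.mpr ⟨Finset.mem_univ i, Finset.notMem_singleton.mpr hij⟩
      rw [hd', Finset.prod_update_of_mem (Finset.mem_univ j),
        Finset.prod_update_of_mem himem]
      have e3 : (Finset.univ \ {j}) \ {i} = (Finset.univ.erase j).erase i := by
        rw [Finset.sdiff_singleton_eq_erase, Finset.sdiff_singleton_eq_erase]
      rw [e3]
      have e4 := Finset.mul_prod_erase Finset.univ d (Finset.mem_univ j)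
      have e5 := Finset.mul_prod_erase (Finset.univ.erase j) d
        (Finset.mem_erase.mpr ⟨hij, Finset.mem_univ i⟩)
      have : d j * (d i * ∏ x ∈ (Finset.univ.erase j).erase i, d x) = 1 := by
        rw [e5, e4]; exact hprod
      calc d i * d j * (1 * ∏ x ∈ (Finset.univ.erase j).erase i, d x)
          = d j * (d i * ∏ x ∈ (Finset.univ.erase j).erase i, d x) := by ring
        _ = 1 := this
    have hsmall' : ∀ a : Fin n, (a : ℕ) < k + 1 → d' a = 1 := by
      intro a ha
      rcases eq_or_ne a i with rfl | hai
      · rw [hd', Function.update_of_ne hij, Function.update_self]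
      · have hak : (a : ℕ) < k := by
          have : (a : ℕ) ≠ k := fun h => hai (Fin.ext (by omega))
          omega
        have haj : a ≠ j := fun h => absurd hak (by rw [h, hjv]; omega)
        rw [hd', Function.update_of_ne haj, Function.update_of_ne hai]
        exact hsmall a hak
    have hT' : ∀ a, Multiplicative.toAdd (T.1 a) = d' a • Multiplicative.toAdd (U.1 a) := by
      intro a
      rcases eq_or_ne a i with rfl | hai
      · rw [hUi, hd', Function.update_of_ne hij, Function.update_self, toAdd_ofAdd,
          one_smul]
        exact hT _
      · rcases eq_or_ne a j with rfl | haj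
        · rw [hUj, hd', Function.update_self, toAdd_ofAdd, smul_smul, hT _]
          congr 1
          field_simp <;> ring
        · rw [hUa a hai haj, hd', Function.update_of_ne haj, Function.update_of_ne hai]
          exact hT _
    exact RSU.trans (ih (k+1) hk1 (by omega) U T d' hprod' hsmall' hT')

lemma reach_scale (hn : 0 < n) (S T : Gen) (d : Fin n → ZMod p)
    (hprod : (∏ i, d i) = 1)
    (hT : ∀ a, Multiplicative.toAdd (T.1 a) = d a • Multiplicative.toAdd (S.1 a)) :
    (genPRG (Multiplicative (Fin n → ZMod p)) n).Reachable S T :=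
  reach_scale_aux (n - 1) 0 hn (by omega) S T d hprod (by omega) hT


lemma rws_ofAdd (M : Matrix (Fin n) (Fin n) (ZMod p)) :
    rws (fun a => Multiplicative.ofAdd (M a)) = M := rfl

lemma reach_of_det_eq (hn : 0 < n) (S T : Gen)
    (h : (rws S.1).det = (rws T.1).det) :
    (genPRG (Multiplicative (Fin n → ZMod p)) n).Reachable S T := by
  have hS : IsUnit (rws S.1).det := (gen_iff _).1 S.2
  have hSne : (rws S.1).det ≠ 0 := by rwa [isUnit_iff_ne_zero] at hS
  set A := rws T.1 * (rws S.1)⁻¹ with hA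
  have hdetA : A.det = 1 := by
    rw [hA, Matrix.det_mul, Matrix.det_nonsing_inv, ← h, Ring.inverse_eq_inv,
      mul_inv_cancel₀ hSne]
  have hmulA : A * rws S.1 = rws T.1 := Matrix.nonsing_inv_mul_cancel_right _ _ hS
  refine Matrix.diagonal_transvection_induction
    (fun B => ∀ (S' T' : Gen), B * rws S'.1 = rws T'.1 →
      (genPRG (Multiplicative (Fin n → ZMod p)) n).Reachable S' T') A
    ?_ ?_ ?_ S T hmulA
  · intro D hD S' T' hST
    rw [hdetA, Matrix.det_diagonal] at hD
    refine reach_scale hn S' T' D hD ?_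
    intro a
    funext b
    have hcong := congrFun (congrFun hST a) b
    rw [Matrix.diagonal_mul] at hcong
    exact hcong.symm
  · rintro ⟨ti, tj, htij, tc⟩ S' T' hST
    rw [Matrix.TransvectionStruct.toMatrix_mk] at hST
    refine reach_rowop S' T' tj ti htij.symm tc ?_
    funext a
    apply Multiplicative.toAdd.injective
    funext b
    rw [Function.update_apply]
    have hcong := congrFun (congrFun hST a) b
    split_ifs with hati
    · subst hati
      rw [Matrix.transvection_mul_apply_same] at hcong
      exact hcong.symm
    · rw [Matrix.transvection_mul_apply_of_ne _ _ _ _ hati] at hcong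
      exact hcong.symm
  · intro A B hA hB S' T' hST
    have hTu : IsUnit (rws T'.1).det := (gen_iff _).1 T'.2
    have hBu : IsUnit (B * rws S'.1).det := by
      have : A * (B * rws S'.1) = rws T'.1 := by rw [← Matrix.mul_assoc]; exact hST
      have h2 : IsUnit (A * (B * rws S'.1)).det := this ▸ hTu
      rw [Matrix.det_mul] at h2
      exact isUnit_of_mul_isUnit_right h2
    have hgen : Subgroup.closure (Set.range
        (fun a => Multiplicative.ofAdd ((B * rws S'.1) a))) = ⊤ := by
      rw [gen_iff, rws_ofAdd]; exact hBu
    set Um : Gen := ⟨_, hgen⟩ with hUm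
    have r1 : (genPRG (Multiplicative (Fin n → ZMod p)) n).Reachable S' Um :=
      hB S' Um (by rw [rws_ofAdd])
    have r2 : (genPRG (Multiplicative (Fin n → ZMod p)) n).Reachable Um T' :=
      hA Um T' (by rw [rws_ofAdd, ← Matrix.mul_assoc]; exact hST)
    exact r1.trans r2


lemma f_adj (S T : Gen) (h : (genPRG (Multiplicative (Fin n → ZMod p)) n).Adj S T) :
    (rws S.1).det = (rws T.1).det := by
  rcases h.2 with hm | hm
  · exact (det_nielsen hm).symm
  · exact det_nielsen hm

lemma card_components (hn : 0 < n) :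
    Nat.card ((genPRG (Multiplicative (Fin n → ZMod p)) n).ConnectedComponent) = p - 1 := by
  haveI : NeZero p := ⟨(Fact.out : p.Prime).ne_zero⟩
  classical
  set f : Gen → (ZMod p)ˣ := fun S => ((gen_iff S.1).1 S.2).unit with hf
  have hfval : ∀ S : Gen, (f S : ZMod p) = (rws S.1).det := fun S => IsUnit.unit_spec _
  have hwalk : ∀ (S T : Gen), (genPRG (Multiplicative (Fin n → ZMod p)) n).Walk S T →
      f S = f T := by
    intro S T w
    induction w with
    | nil => rfl
    | cons ha q ih =>
      refine Eq.trans ?_ ih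
      exact Units.ext (by rw [hfval, hfval]; exact f_adj _ _ ha)
  set F : (genPRG (Multiplicative (Fin n → ZMod p)) n).ConnectedComponent → (ZMod p)ˣ :=
    SimpleGraph.ConnectedComponent.lift f (fun v w pth _ => hwalk v w pth) with hF
  have hFmk : ∀ S : Gen,
      F ((genPRG (Multiplicative (Fin n → ZMod p)) n).connectedComponentMk S) = f S :=
    fun S => rfl
  have hbij : Function.Bijective F := by
    constructor
    · intro c1 c2
      refine SimpleGraph.ConnectedComponent.ind₂ (fun S T hFT => ?_) c1 c2
      rw [hFmk, hFmk] at hFT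
      have hdet : (rws S.1).det = (rws T.1).det := by
        rw [← hfval, ← hfval, hFT]
      exact SimpleGraph.ConnectedComponent.sound (reach_of_det_eq hn S T hdet)
    · intro u
      set dv : Fin n → ZMod p := Function.update (fun _ => (1 : ZMod p)) ⟨0, hn⟩ (u : ZMod p)
        with hdv
      have hdet : (Matrix.diagonal dv).det = (u : ZMod p) := by
        rw [Matrix.det_diagonal, hdv, Finset.prod_update_of_mem (Finset.mem_univ _)]
        simp
      have hgenu : Subgroup.closure (Set.range
          (fun a => Multiplicative.ofAdd ((Matrix.diagonal dv) a))) = ⊤ := by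
        rw [gen_iff, rws_ofAdd, hdet]
        exact u.isUnit
      refine ⟨(genPRG (Multiplicative (Fin n → ZMod p)) n).connectedComponentMk
        ⟨_, hgenu⟩, ?_⟩
      rw [hFmk]
      apply Units.ext
      rw [hfval]
      show (rws (fun a => Multiplicative.ofAdd ((Matrix.diagonal dv) a))).det = _
      rw [rws_ofAdd, hdet]
  rw [Nat.card_congr (Equiv.ofBijective F hbij), Nat.card_eq_fintype_card,
    ZMod.card_units]

end

/-- Generating `n`-tuples of `ℤ_p^n` are exactly the bases (tuples whose matrix is
invertible, i.e. has nonzero determinant), and `Γ_n(ℤ_p^n)` has exactly `p - 1`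
connected components, one for each value of the determinant. -/
theorem stmt6 (p : ℕ) [Fact p.Prime] (n : ℕ) (hn : 1 ≤ n) :
    (∀ S : Fin n → Multiplicative (Fin n → ZMod p),
      Subgroup.closure (Set.range S) = ⊤ ↔
        IsUnit (Matrix.det (Matrix.of fun i j => Multiplicative.toAdd (S i) j))) ∧
    (∀ S T : {S : Fin n → Multiplicative (Fin n → ZMod p) //
        Subgroup.closure (Set.range S) = ⊤},
      (genPRG (Multiplicative (Fin n → ZMod p)) n).Reachable S T ↔
        Matrix.det (Matrix.of fun i j => Multiplicative.toAdd (S.1 i) j) =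
        Matrix.det (Matrix.of fun i j => Multiplicative.toAdd (T.1 i) j)) ∧
    Nat.card ((genPRG (Multiplicative (Fin n → ZMod p)) n).ConnectedComponent) = p - 1 := by
  refine ⟨fun S => gen_iff S, fun S T => ⟨fun h => reach_det h,
    fun h => reach_of_det_eq hn S T h⟩, card_components hn⟩
end

section
/- Let H < G be finitely generated groups. Suppose some connected component of Γ_m(H) has exponential growth, and let S = (g_1,...,g_n) be a generating n-tuple of G. Then the connected component of Γ_{n+m}(G) containing (g_1,...,g_n,1,...,1) has exponential growth. -/
open Filter Subgroup Set

/-- The product replacement graph of `G` on `n`-tuples: edges are Nielsen moves.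
(Nielsen moves preserve generation, so the connected component of a generating
`n`-tuple consists exactly of generating `n`-tuples.) -/
def PRG (G : Type*) [Group G] (n : ℕ) : SimpleGraph (Fin n → G) where
  Adj S T := S ≠ T ∧ (nielsenMove S T ∨ nielsenMove T S)
  symm := ⟨fun S T h => ⟨h.1.symm, h.2.symm⟩⟩
  loopless := ⟨fun S h => h.1 rfl⟩

/-- The ball of radius `r` around vertex `v` in a graph. -/
def gball {V : Type*} (Γ : SimpleGraph V) (v : V) (r : ℕ) : Set V :=
  {w | ∃ p : Γ.Walk v w, p.length ≤ r}

/-- `Γ` has exponential growth from `v`. -/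
def expGrowthFrom {V : Type*} (Γ : SimpleGraph V) (v : V) : Prop :=
  ∃ α : ℝ, 1 < α ∧ ∀ᶠ r : ℕ in atTop, α ^ r ≤ ((gball Γ v r).ncard : ℝ)

/-- The ball of radius `r` in the Cayley graph of `G` with respect to the tuple `S`. -/
def cayleyBall {G : Type*} [Group G] {n : ℕ} (S : Fin n → G) (r : ℕ) : Set G :=
  {g | ∃ l : List G, l.length ≤ r ∧ (∀ x ∈ l, x ∈ Set.range S ∨ x⁻¹ ∈ Set.range S) ∧
    l.prod = g}

/-! ### Auxiliary lemmas -/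

lemma nielsenMove_symm {G : Type*} [Group G] {k : ℕ} {S T : Fin k → G}
    (h : nielsenMove S T) : nielsenMove T S := by
  obtain ⟨i, j, hij, hc⟩ := h
  refine ⟨i, j, hij, ?_⟩
  rcases hc with h|h|h|h <;> subst h
  · refine Or.inr (Or.inl ?_)
    funext x
    by_cases hx : x = j
    · subst hx; simp [Function.update_of_ne hij]
    · simp [Function.update_of_ne hx]
  · refine Or.inl ?_
    funext x
    by_cases hx : x = j
    · subst hx; simp [Function.update_of_ne hij]
    · simp [Function.update_of_ne hx]
  · refine Or.inr (Or.inr (Or.inr ?_))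
    funext x
    by_cases hx : x = j
    · subst hx; simp [Function.update_of_ne hij]
    · simp [Function.update_of_ne hx]
  · refine Or.inr (Or.inr (Or.inl ?_))
    funext x
    by_cases hx : x = j
    · subst hx; simp [Function.update_of_ne hij]
    · simp [Function.update_of_ne hx]

lemma nbhd_finite {G : Type*} [Group G] {k : ℕ} (S : Fin k → G) :
    {T | (PRG G k).Adj S T}.Finite := by
  have hsub : {T | (PRG G k).Adj S T} ⊆
      ⋃ i : Fin k, ⋃ j : Fin k,
        ({Function.update S j (S j * S i), Function.update S j (S j * (S i)⁻¹),
          Function.update S j (S i * S j), Function.update S j ((S i)⁻¹ * S j)} :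
          Set (Fin k → G)) := by
    intro T hT
    have hmove : nielsenMove S T := by
      rcases hT.2 with h | h
      · exact h
      · exact nielsenMove_symm h
    obtain ⟨i, j, hij, hc⟩ := hmove
    refine Set.mem_iUnion.2 ⟨i, Set.mem_iUnion.2 ⟨j, ?_⟩⟩
    simp only [Set.mem_insert_iff, Set.mem_singleton_iff]
    tauto
  exact Set.Finite.subset (Set.finite_iUnion fun i => Set.finite_iUnion fun j =>
    Set.toFinite _) hsub

lemma gball_finite {V : Type*} (Γ : SimpleGraph V)
    (hfin : ∀ v, {w | Γ.Adj v w}.Finite) (v : V) : ∀ r, (gball Γ v r).Finite := by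
  intro r
  induction r with
  | zero =>
    refine Set.Finite.subset (Set.finite_singleton v) ?_
    rintro w ⟨p, hp⟩
    have := SimpleGraph.Walk.eq_of_length_eq_zero (Nat.le_zero.mp hp)
    simp [this]
  | succ r ih =>
    refine Set.Finite.subset (ih.union (ih.biUnion fun u _ => hfin u)) ?_
    rintro w ⟨p, hp⟩
    rcases Nat.lt_or_ge p.length (r + 1) with hl | hl
    · exact Or.inl ⟨p, Nat.lt_succ_iff.mp hl⟩
    · have hlen : p.reverse.length = r + 1 := by
        rw [SimpleGraph.Walk.length_reverse]; omega
      have hnil : ¬ p.reverse.Nil := by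
        rw [SimpleGraph.Walk.nil_iff_length_eq, hlen]; omega
      obtain ⟨u, ha, q, hq⟩ := SimpleGraph.Walk.not_nil_iff.mp hnil
      have hql : q.length = r := by
        have := hlen; rw [hq] at this; simpa using this
      refine Or.inr (Set.mem_biUnion ⟨q.reverse, ?_⟩ ha.symm)
      rw [SimpleGraph.Walk.length_reverse, hql]

lemma append_update {G : Type*} {n m : ℕ} (S : Fin n → G) (c : Fin m → G) (j : Fin m)
    (v : G) : Fin.append S (Function.update c j v) =
      Function.update (Fin.append S c) (Fin.natAdd n j) v := by
  funext k
  refine Fin.addCases (fun k' => ?_) (fun k' => ?_) k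
  · have hne : (Fin.castAdd m k' : Fin (n + m)) ≠ Fin.natAdd n j := by
      simp [Fin.ext_iff]; omega
    rw [Function.update_of_ne hne, Fin.append_left, Fin.append_left]
  · rw [Fin.append_right]
    by_cases hk : k' = j
    · subst hk; simp
    · have hne : (Fin.natAdd n k' : Fin (n + m)) ≠ Fin.natAdd n j := by
        simp [Fin.ext_iff]; omega
      rw [Function.update_of_ne hne, Function.update_of_ne hk, Fin.append_right]

lemma step_reach {G : Type*} [Group G] {n m : ℕ} (S : Fin n → G) (c : Fin m → G)
    (j : Fin m) (x : G) (hx : x ∈ Set.range S ∨ x⁻¹ ∈ Set.range S) :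
    (PRG G (n + m)).Reachable (Fin.append S c)
      (Fin.append S (Function.update c j (c j * x))) := by
  by_cases heq : Fin.append S (Function.update c j (c j * x)) = Fin.append S c
  · rw [heq]
  · refine SimpleGraph.Adj.reachable ⟨fun h => heq h.symm, Or.inl ?_⟩
    rcases hx with ⟨i, hi⟩ | ⟨i, hi⟩
    · refine ⟨Fin.castAdd m i, Fin.natAdd n j, by simp [Fin.ext_iff]; omega, Or.inl ?_⟩
      rw [append_update, Fin.append_right, Fin.append_left, hi]
    · refine ⟨Fin.castAdd m i, Fin.natAdd n j, by simp [Fin.ext_iff]; omega,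
        Or.inr (Or.inl ?_)⟩
      rw [append_update, Fin.append_right, Fin.append_left, hi, inv_inv]

lemma word_reach {G : Type*} [Group G] {n m : ℕ} (S : Fin n → G) :
    ∀ (l : List G), (∀ x ∈ l, x ∈ Set.range S ∨ x⁻¹ ∈ Set.range S) →
    ∀ (c : Fin m → G) (j : Fin m),
    (PRG G (n + m)).Reachable (Fin.append S c)
      (Fin.append S (Function.update c j (c j * l.prod))) := by
  intro l
  induction l with
  | nil =>
    intro _ c j
    simp only [List.prod_nil, mul_one, Function.update_eq_self]
    exact SimpleGraph.Reachable.refl _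
  | cons x l ih =>
    intro hmem c j
    have h1 := step_reach S c j x (hmem x (by simp))
    have h2 := ih (fun y hy => hmem y (by simp [hy])) (Function.update c j (c j * x)) j
    refine h1.trans (h2.trans ?_)
    have : Function.update (Function.update c j (c j * x)) j
        (Function.update c j (c j * x) j * l.prod) =
        Function.update c j (c j * (x :: l).prod) := by
      simp [mul_assoc]
    rw [this]

lemma tuple_reach {G : Type*} [Group G] {n m : ℕ} (S : Fin n → G)
    (hS : closure (Set.range S) = ⊤) (c d : Fin m → G) :
    (PRG G (n + m)).Reachable (Fin.append S c) (Fin.append S d) := by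
  have key : ∀ k : ℕ, k ≤ m → (PRG G (n + m)).Reachable (Fin.append S c)
      (Fin.append S (fun i => if i.val < k then d i else c i)) := by
    intro k
    induction k with
    | zero => intro _; exact SimpleGraph.Reachable.refl _
    | succ k ih =>
      intro hk
      refine (ih (by omega)).trans ?_
      set e : Fin m → G := fun i => if i.val < k then d i else c i with he
      set jk : Fin m := ⟨k, by omega⟩ with hjk
      have hd : d jk ∈ closure (Set.range S) := by rw [hS]; trivial
      have hd0 : (e jk)⁻¹ * d jk ∈ closure (Set.range S) := by rw [hS]; trivial
      have hd' : (e jk)⁻¹ * d jk ∈ Submonoid.closure (Set.range S ∪ (Set.range S)⁻¹) := by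
        rw [← Subgroup.closure_toSubmonoid]; exact hd0
      obtain ⟨l, hl, hlp⟩ := Submonoid.exists_list_of_mem_closure hd'
      have hl' : ∀ x ∈ l, x ∈ Set.range S ∨ x⁻¹ ∈ Set.range S := by
        intro x hx
        rcases hl x hx with h | h
        · exact Or.inl h
        · exact Or.inr (by simpa using h)
      have := word_reach S l hl' e jk
      rw [hlp] at this
      have heq : Function.update e jk (e jk * ((e jk)⁻¹ * d jk)) =
          (fun i => if i.val < k + 1 then d i else c i) := by
        funext i
        by_cases hi : i = jk
        · subst hi
          rw [Function.update_self, if_pos (by rw [hjk]; exact Nat.lt_succ_self k)]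
          exact mul_inv_cancel_left _ _
        · rw [Function.update_of_ne hi]
          have hik : (i : ℕ) ≠ k := fun h => hi (Fin.ext (by rw [h, hjk]))
          show (if (i : ℕ) < k then d i else c i) = _
          by_cases h2 : (i : ℕ) < k
          · rw [if_pos h2, if_pos (by omega)]
          · rw [if_neg h2, if_neg (by omega)]
      rw [heq] at this
      exact this
  have := key m le_rfl
  have he : (fun i : Fin m => if i.val < m then d i else c i) = d := by
    funext i; simp [i.isLt]
  rwa [he] at this

section emb
variable {G : Type*} [Group G] (H : Subgroup G) {n m : ℕ} (S : Fin n → G)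

def embMap (c : Fin m → H) : Fin (n + m) → G :=
  Fin.append S (fun i => ((c i : G)))

lemma embMap_inj : Function.Injective (embMap H S (m := m)) := by
  intro c d h
  funext i
  have := congrFun h (Fin.natAdd n i)
  rw [embMap, embMap, Fin.append_right, Fin.append_right] at this
  exact Subtype.ext this

lemma embMap_update (c : Fin m → H) (j : Fin m) (v : H) :
    embMap H S (Function.update c j v) =
      Function.update (embMap H S c) (Fin.natAdd n j) (v : G) := by
  have hfun : (fun i => ((Function.update c j v i : H) : G)) =
      Function.update (fun i => ((c i : G))) j (v : G) := by
    funext i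
    by_cases hi : i = j
    · subst hi; simp
    · rw [Function.update_of_ne hi, Function.update_of_ne hi]
  rw [embMap, hfun, append_update]
  rfl

lemma embMap_nielsen {c d : Fin m → H} (h : nielsenMove c d) :
    nielsenMove (embMap H S c) (embMap H S d) := by
  obtain ⟨i, j, hij, hc⟩ := h
  refine ⟨Fin.natAdd n i, Fin.natAdd n j,
    fun h => hij (by simpa [Fin.ext_iff] using h), ?_⟩
  have hi : embMap H S c (Fin.natAdd n i) = (c i : G) := Fin.append_right _ _ _
  have hj : embMap H S c (Fin.natAdd n j) = (c j : G) := Fin.append_right _ _ _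
  rcases hc with h|h|h|h <;> subst h <;> rw [embMap_update] <;>
    [exact Or.inl (by rw [hi, hj]; push_cast; rfl);
     exact Or.inr (Or.inl (by rw [hi, hj]; push_cast; rfl));
     exact Or.inr (Or.inr (Or.inl (by rw [hi, hj]; push_cast; rfl)));
     exact Or.inr (Or.inr (Or.inr (by rw [hi, hj]; push_cast; rfl)))]

def embHom : PRG H m →g PRG G (n + m) where
  toFun := embMap H S
  map_rel' := by
    rintro c d ⟨hne, hmv⟩
    refine ⟨fun h => hne (embMap_inj H S h), ?_⟩
    rcases hmv with h | h
    · exact Or.inl (embMap_nielsen H S h)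
    · exact Or.inr (embMap_nielsen H S h)
end emb

theorem stmt7 {G : Type*} [Group G] (H : Subgroup G) (hG : Group.FG G) (hH : Group.FG H)
    {m n : ℕ} (T : Fin m → H) (hT : closure (Set.range T) = ⊤)
    (hTgrow : expGrowthFrom (PRG H m) T)
    (S : Fin n → G) (hS : closure (Set.range S) = ⊤) :
    expGrowthFrom (PRG G (n + m)) (Fin.append S fun _ => 1) := by
  obtain ⟨α, hα, hev⟩ := hTgrow
  have hα0 : (0 : ℝ) < α := by linarith
  set base : Fin (n + m) → G := Fin.append S fun _ => 1 with hbase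
  have hreach : (PRG G (n + m)).Reachable base (embMap H S T) :=
    tuple_reach S hS (fun _ => 1) (fun i => (T i : G))
  obtain ⟨p0⟩ := hreach
  set L := p0.length with hL
  have hmap : ∀ r : ℕ, ((gball (PRG H m) T r).ncard : ℝ) ≤
      ((gball (PRG G (n + m)) base (L + r)).ncard : ℝ) := by
    intro r
    have hsub : embMap H S '' gball (PRG H m) T r ⊆
        gball (PRG G (n + m)) base (L + r) := by
      rintro _ ⟨c, ⟨p, hp⟩, rfl⟩
      refine ⟨p0.append (p.map (embHom H S)), ?_⟩
      erw [SimpleGraph.Walk.length_append, SimpleGraph.Walk.length_map]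
      omega
    have hfin := gball_finite (PRG G (n + m)) (fun v => nbhd_finite v) base (L + r)
    have hle := Set.ncard_le_ncard hsub hfin
    rw [Set.ncard_image_of_injective _ (embMap_inj H S)] at hle
    exact_mod_cast hle
  refine ⟨(1 + α) / 2, by linarith, ?_⟩
  set β : ℝ := (1 + α) / 2 with hβ
  have hβ1 : 1 < β := by rw [hβ]; linarith
  have hβ0 : (0 : ℝ) < β := by linarith
  have hβα : β < α := by rw [hβ]; linarith
  have hgrow : ∀ᶠ r : ℕ in atTop, α ^ L ≤ (α / β) ^ r :=
    (tendsto_pow_atTop_atTop_of_one_lt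
      (by rw [lt_div_iff₀ hβ0]; linarith)).eventually_ge_atTop _
  obtain ⟨N, hN⟩ := eventually_atTop.mp hev
  obtain ⟨M, hM⟩ := eventually_atTop.mp hgrow
  rw [eventually_atTop]
  refine ⟨N + L + M, fun r hr => ?_⟩
  have hrL : L ≤ r := by omega
  have h1 : α ^ (r - L) ≤ ((gball (PRG H m) T (r - L)).ncard : ℝ) := hN _ (by omega)
  have h2 := hmap (r - L)
  have h3 : L + (r - L) = r := by omega
  rw [h3] at h2
  have h4 : β ^ r ≤ α ^ (r - L) := by
    rw [pow_sub₀ α (ne_of_gt hα0) hrL, ← div_eq_mul_inv, le_div_iff₀ (pow_pos hα0 L)]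
    calc β ^ r * α ^ L ≤ β ^ r * (α / β) ^ r := by
          exact mul_le_mul_of_nonneg_left (hM r (by omega)) (pow_nonneg (le_of_lt hβ0) r)
      _ = α ^ r := by
          rw [← mul_pow]
          congr 1
          field_simp
  linarith
end

section
/- Let f: G → H be a surjective group homomorphism with finite kernel, and let S be a generating n-tuple of G. If the connected component of S in Γ_n(G) has exponential growth, then the connected component of f(S) in Γ_n(H) has exponential growth. -/
open Filter Subgroup Set

section aux
variable {G H : Type*} [Group G] [Group H] {n : ℕ} (f : G →* H)

lemma push_move {S T : Fin n → G} (h : nielsenMove S T) :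
    nielsenMove (f ∘ S) (f ∘ T) := by
  obtain ⟨i, j, hij, h⟩ := h
  refine ⟨i, j, hij, ?_⟩
  rcases h with h | h | h | h <;> subst h <;>
    simp only [Function.comp_update, map_mul, map_inv, Function.comp_apply] <;> tauto

lemma lift_move_fwd (S : Fin n → G) {T' : Fin n → H} (h : nielsenMove (f ∘ S) T') :
    ∃ T : Fin n → G, nielsenMove S T ∧ f ∘ T = T' := by
  obtain ⟨i, j, hij, h⟩ := h
  rcases h with h | h | h | h
  · exact ⟨Function.update S j (S j * S i), ⟨i, j, hij, Or.inl rfl⟩, by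
      rw [h, Function.comp_update]; simp⟩
  · exact ⟨Function.update S j (S j * (S i)⁻¹), ⟨i, j, hij, Or.inr (Or.inl rfl)⟩, by
      rw [h, Function.comp_update]; simp⟩
  · exact ⟨Function.update S j (S i * S j), ⟨i, j, hij, Or.inr (Or.inr (Or.inl rfl))⟩, by
      rw [h, Function.comp_update]; simp⟩
  · exact ⟨Function.update S j ((S i)⁻¹ * S j), ⟨i, j, hij, Or.inr (Or.inr (Or.inr rfl))⟩, by
      rw [h, Function.comp_update]; simp⟩

lemma lift_move_bwd (S : Fin n → G) {T' : Fin n → H} (h : nielsenMove T' (f ∘ S)) :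
    ∃ T : Fin n → G, nielsenMove T S ∧ f ∘ T = T' := by
  obtain ⟨i, j, hij, h⟩ := h
  have hkj : ∀ k, k ≠ j → f (S k) = T' k := by
    intro k hk
    rcases h with h | h | h | h <;>
      · have := congrFun h k
        simp only [Function.comp_apply, Function.update_of_ne hk] at this
        exact this
  have hi : f (S i) = T' i := hkj i hij
  have hj : f (S j) = (Function.update T' j (T' j * T' i) j) ∨ True := Or.inr trivial
  rcases h with h | h | h | h
  · -- f∘S = update T' j (T' j * T' i)
    have hj : f (S j) = T' j * T' i := by
      have := congrFun h j; simpa using this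
    refine ⟨Function.update S j (S j * (S i)⁻¹), ⟨i, j, hij, Or.inl ?_⟩, ?_⟩
    · funext k
      rcases eq_or_ne k j with rfl | hk
      · simp [Function.update_of_ne hij]
      · simp [Function.update_of_ne hk]
    · funext k
      rcases eq_or_ne k j with rfl | hk
      · simp [hj, hi]
      · simp [Function.update_of_ne hk, hkj k hk]
  · have hj : f (S j) = T' j * (T' i)⁻¹ := by
      have := congrFun h j; simpa using this
    refine ⟨Function.update S j (S j * S i), ⟨i, j, hij, Or.inr (Or.inl ?_)⟩, ?_⟩
    · funext k
      rcases eq_or_ne k j with rfl | hk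
      · simp [Function.update_of_ne hij]
      · simp [Function.update_of_ne hk]
    · funext k
      rcases eq_or_ne k j with rfl | hk
      · simp [hj, hi]
      · simp [Function.update_of_ne hk, hkj k hk]
  · have hj : f (S j) = T' i * T' j := by
      have := congrFun h j; simpa using this
    refine ⟨Function.update S j ((S i)⁻¹ * S j), ⟨i, j, hij, Or.inr (Or.inr (Or.inl ?_))⟩, ?_⟩
    · funext k
      rcases eq_or_ne k j with rfl | hk
      · simp [Function.update_of_ne hij]
      · simp [Function.update_of_ne hk]
    · funext k
      rcases eq_or_ne k j with rfl | hk
      · simp [hj, hi, mul_assoc]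
      · simp [Function.update_of_ne hk, hkj k hk]
  · have hj : f (S j) = (T' i)⁻¹ * T' j := by
      have := congrFun h j; simpa using this
    refine ⟨Function.update S j (S i * S j), ⟨i, j, hij, Or.inr (Or.inr (Or.inr ?_))⟩, ?_⟩
    · funext k
      rcases eq_or_ne k j with rfl | hk
      · simp [Function.update_of_ne hij]
      · simp [Function.update_of_ne hk]
    · funext k
      rcases eq_or_ne k j with rfl | hk
      · simp [hj, hi, mul_assoc]
      · simp [Function.update_of_ne hk, hkj k hk]

lemma lift_adj (S : Fin n → G) {w' : Fin n → H} (h : (PRG H n).Adj (f ∘ S) w') :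
    ∃ T : Fin n → G, (PRG G n).Adj S T ∧ f ∘ T = w' := by
  obtain ⟨hne, hm | hm⟩ := h
  · obtain ⟨T, hT, hfT⟩ := lift_move_fwd f S hm
    exact ⟨T, ⟨fun e => hne (by rw [e, hfT]), Or.inl hT⟩, hfT⟩
  · obtain ⟨T, hT, hfT⟩ := lift_move_bwd f S hm
    exact ⟨T, ⟨fun e => hne (by rw [e, hfT]), Or.inr hT⟩, hfT⟩

lemma push_walk {S T : Fin n → G} (p : (PRG G n).Walk S T) :
    ∃ q : (PRG H n).Walk (f ∘ S) (f ∘ T), q.length ≤ p.length := by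
  induction p with
  | nil => exact ⟨.nil, le_rfl⟩
  | @cons u v w h p ih =>
    obtain ⟨q, hq⟩ := ih
    by_cases he : f ∘ u = f ∘ v
    · exact ⟨q.copy he.symm rfl, by simpa using hq.trans (Nat.le_succ _)⟩
    · refine ⟨q.cons (show (PRG H n).Adj _ _ from ⟨he, ?_⟩), by simpa using Nat.succ_le_succ hq⟩
      rcases h.2 with hm | hm
      · exact Or.inl (push_move f hm)
      · exact Or.inr (push_move f hm)

lemma lift_walk : ∀ {v' w' : Fin n → H} (p : (PRG H n).Walk v' w') (S : Fin n → G),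
    f ∘ S = v' → ∃ (T : Fin n → G) (q : (PRG G n).Walk S T),
      f ∘ T = w' ∧ q.length = p.length := by
  intro v' w' p
  induction p with
  | nil => exact fun S hS => ⟨S, .nil, hS, rfl⟩
  | @cons u v w h p ih =>
    intro S hS
    subst hS
    obtain ⟨T₁, hadj, hT₁⟩ := lift_adj f S h
    obtain ⟨T, q, hT, hq⟩ := ih T₁ hT₁
    exact ⟨T, q.cons hadj, hT, by simp [hq]⟩



lemma ncard_le_mul (hker : (f.ker : Set G).Finite) {s : Set (Fin n → G)} (hs : s.Finite) :
    s.ncard ≤ hker.toFinset.card ^ n * ((fun x => f ∘ x) '' s).ncard := by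
  classical
  set φ : (Fin n → G) → Fin n → H := fun x => f ∘ x with hφ
  have h1 : s.ncard = hs.toFinset.card := by
    rw [← Set.ncard_coe_finset, Set.Finite.coe_toFinset]
  have h2 : (φ '' s).ncard = (hs.toFinset.image φ).card := by
    rw [← Set.ncard_coe_finset, Finset.coe_image, Set.Finite.coe_toFinset]
  rw [h1, h2]
  refine Finset.card_le_mul_card_image _ _ ?_
  intro a ha
  obtain ⟨x₀, hx₀, hx₀a⟩ := Finset.mem_image.1 ha
  refine (Finset.card_le_card_of_injOn
    (s := Finset.filter (fun x => φ x = a) hs.toFinset)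
    (t := Fintype.piFinset fun _ : Fin n => hker.toFinset)
    (fun x i => x i * (x₀ i)⁻¹) ?_ ?_).trans ?_
  · intro x hx
    simp only [Finset.mem_coe, Finset.mem_filter] at hx
    simp only [Finset.mem_coe, Fintype.mem_piFinset]
    intro i
    rw [Set.Finite.mem_toFinset]
    show x i * (x₀ i)⁻¹ ∈ (f.ker : Set G)
    rw [SetLike.mem_coe, MonoidHom.mem_ker, map_mul, map_inv]
    have e1 : f (x i) = a i := congrFun hx.2 i
    have e2 : f (x₀ i) = a i := congrFun hx₀a i
    rw [e1, e2, mul_inv_cancel]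
  · intro x _ y _ hxy
    funext i
    exact mul_right_cancel (congrFun hxy i)
  · rw [Fintype.card_piFinset]
    simp

end aux

theorem stmt9 {G H : Type*} [Group G] [Group H] (hGfg : Group.FG G) (hHfg : Group.FG H)
    (f : G →* H) (hf : Function.Surjective f) (hker : (f.ker : Set G).Finite)
    {n : ℕ} (S : Fin n → G) (hS : closure (Set.range S) = ⊤)
    (h : expGrowthFrom (PRG G n) S) :
    expGrowthFrom (PRG H n) (f ∘ S) := by
  classical
  obtain ⟨α, hα, hev⟩ := h
  set C : ℕ := hker.toFinset.card ^ n with hCdef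
  have hCpos : 0 < C :=
    pow_pos (Finset.card_pos.2 ⟨1, by simp [Set.Finite.mem_toFinset]⟩) n
  refine ⟨(1 + α) / 2, by linarith, ?_⟩
  have hβ1 : (1 : ℝ) < (1 + α) / 2 := by linarith
  have hq : 1 < α / ((1 + α) / 2) := (one_lt_div (by linarith)).2 (by linarith)
  have hevC := (tendsto_pow_atTop_atTop_of_one_lt hq).eventually_ge_atTop (C : ℝ)
  filter_upwards [hev, hevC] with r h1 h2
  have hfin : (gball (PRG G n) S r).Finite := by
    by_contra hinf
    rw [(Set.Infinite.ncard hinf : (gball (PRG G n) S r).ncard = 0)] at h1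
    have : (0:ℝ) < α ^ r := pow_pos (by linarith) r
    simp at h1
    linarith
  have himg : gball (PRG H n) (f ∘ S) r = (fun x => f ∘ x) '' gball (PRG G n) S r := by
    ext w'
    constructor
    · rintro ⟨p, hp⟩
      obtain ⟨T, q, hT, hq⟩ := lift_walk f p S rfl
      exact ⟨T, ⟨q, hq ▸ hp⟩, hT⟩
    · rintro ⟨T, ⟨q, hq⟩, rfl⟩
      obtain ⟨p, hp⟩ := push_walk f q
      exact ⟨p, hp.trans hq⟩
  have hcount : (gball (PRG G n) S r).ncard ≤ C * (gball (PRG H n) (f ∘ S) r).ncard := by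
    rw [himg]
    exact ncard_le_mul f hker hfin
  have h3 : ((1 + α) / 2) ^ r * C ≤ α ^ r := by
    have hb := mul_le_mul_of_nonneg_left h2 (le_of_lt (pow_pos (by linarith : (0:ℝ) < (1+α)/2) r))
    calc ((1 + α) / 2) ^ r * (C : ℝ) ≤ ((1 + α) / 2) ^ r * (α / ((1 + α) / 2)) ^ r := hb
      _ = α ^ r := by rw [← mul_pow]; congr 1; field_simp
  have h4 : ((gball (PRG G n) S r).ncard : ℝ) ≤ C * (gball (PRG H n) (f ∘ S) r).ncard := by
    exact_mod_cast hcount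
  have h5 : ((1 + α) / 2) ^ r * C ≤ (C : ℝ) * (gball (PRG H n) (f ∘ S) r).ncard :=
    h3.trans (h1.trans h4)
  have hC0 : (0:ℝ) < C := by exact_mod_cast hCpos
  rw [mul_comm (C:ℝ)] at h5
  exact (mul_le_mul_iff_of_pos_right hC0).1 h5
end
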